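/- Let u be the exact solution of ∇·(−k∇u + v u) = f in Ω with u = g on ∂Ω, u_h the SUPG/CGFEM solution, and ũ_{τ,h} the solution of the auxiliary elemental Neumann problem on a triangle τ. Then the total post-processed flux through ∂τ equals the true flux: ∫_{∂τ} (−k∇ũ_{τ,h} + u_h v)·n dl = ∫_{∂τ} (−k∇u + u v)·n dl. -/

import Mathlib

open MeasureTheory
open scoped RealInnerProductSpace

noncomputable section

/-- The plane ℝ². -/
abbrev E2 : Type := EuclideanSpace ℝ (Fin 2)

/-- Divergence of a vector field on the plane. -/
def vdiv (w : E2 → E2) (x : E2) : ℝ := ∑ i, fderiv ℝ w x (EuclideanSpace.single i 1) i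

/-- `F^ξ = ℓ_τ(φ_ξ) = ∫_τ f (φ_ξ + δ v·∇φ_ξ) dx`, the SUPG elemental load. -/
def Fel (f : E2 → ℝ) (v : E2 → E2) (δ : ℝ) (τ : Set E2) (φ : E2 → ℝ) : ℝ :=
  ∫ x in τ, f x * (φ x + δ * ⟪v x, gradient φ x⟫)

/-- `Q^ξ = a_τ(u_h, φ_ξ)`, the SUPG elemental stiffness contribution. -/
def Qel (k uh : E2 → ℝ) (v : E2 → E2) (δ : ℝ) (τ : Set E2) (φ : E2 → ℝ) : ℝ :=
  ∫ x in τ, (⟪k x • gradient uh x - uh x • v x, gradient φ x⟫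
    + δ * vdiv (fun y => -(k y) • gradient uh y + uh y • v y) x * ⟪v x, gradient φ x⟫)

/-- Functions equal on an arbitrary set `s` that are a.e. strongly measurable with
respect to `μ.restrict s` are a.e. equal with respect to `μ.restrict s`. -/
theorem eqOn_ae_restrict {α : Type*} [MeasurableSpace α] {μ : Measure α} {s : Set α}
    {F G : α → ℝ}
    (hF : AEStronglyMeasurable F (μ.restrict s))
    (hG : AEStronglyMeasurable G (μ.restrict s))
    (h : Set.EqOn F G s) : F =ᵐ[μ.restrict s] G := by
  have hFm := hF.ae_eq_mk
  have hGm := hG.ae_eq_mk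
  refine hFm.trans (.trans ?_ hGm.symm)
  have hmeas : MeasurableSet {x | ¬ hF.mk F x = hG.mk G x} :=
    (measurableSet_eq_fun hF.stronglyMeasurable_mk.measurable
      hG.stronglyMeasurable_mk.measurable).compl
  have hN : (μ.restrict s) ({x | ¬ F x = hF.mk F x} ∪ {x | ¬ G x = hG.mk G x}) = 0 :=
    measure_union_null hFm hGm
  rw [Filter.EventuallyEq, ae_iff, Measure.restrict_apply hmeas]
  refine le_antisymm ?_ zero_le
  calc μ ({x | ¬ hF.mk F x = hG.mk G x} ∩ s)
      ≤ μ (({x | ¬ F x = hF.mk F x} ∪ {x | ¬ G x = hG.mk G x}) ∩ s) := by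
        refine measure_mono fun x hx => ?_
        obtain ⟨hx1, hx2⟩ := hx
        refine ⟨?_, hx2⟩
        by_contra hc
        simp only [Set.mem_union, Set.mem_setOf_eq, not_or, not_not] at hc
        exact hx1 (hc.1 ▸ hc.2 ▸ h hx2)
    _ ≤ (μ.restrict s) ({x | ¬ F x = hF.mk F x} ∪ {x | ¬ G x = hG.mk G x}) :=
        Measure.le_restrict_apply _ _
    _ = 0 := hN


/-- let `u` be the exact solution of `∇·(−k∇u + v u) = f` in `Ω` (with
`u = g` on `∂Ω`), `u_h` the SUPG/CGFEM solution, and `ũ_{τ,h} = Σ_ξ α_ξ φ_ξ` the solution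
of the auxiliary elemental Neumann problem on a triangle `τ ⊆ Ω`.  Then the total
post-processed flux through `∂τ` equals the true flux:
`∫_{∂τ} (−k∇ũ_{τ,h} + u_h v)·n dl = ∫_{∂τ} (−k∇u + u v)·n dl`.

Here `στ` is the arclength measure on `∂τ` with outward unit normal `nτ`, decomposed as
`στ = Σ_ξ Γσ ξ` where `Γσ ξ` is the arclength measure on `∂τ ∩ ∂t_ξ`; `t ξ` are the three
quadrilaterals subdividing `τ`, `σ ξ` is the arclength measure on `∂t_ξ` with outward unit
normal `n ξ`, and the divergence theorem on the triangle `τ` is recorded by `hdivthm`. -/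
theorem stmt4
    (Ω : Set E2) (k f u uh : E2 → ℝ) (v : E2 → E2) (δ : ℝ)
    (τ : Set E2) (t : Fin 3 → Set E2)
    (φ : Fin 3 → E2 → ℝ) (α : Fin 3 → ℝ)
    (σ : Fin 3 → Measure E2) (n : Fin 3 → E2 → E2)
    (στ : Measure E2) (Γσ : Fin 3 → Measure E2) (nτ : E2 → E2)
    (hτΩ : τ ⊆ Ω)
    -- `u` solves the PDE `∇·(−k∇u + v u) = f` in `Ω`
    (hpde : ∀ x ∈ Ω, vdiv (fun y => -(k y) • gradient u y + u y • v y) x = f x)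
    -- basis functions sum to one with vanishing gradient sum
    (hpartition : ∀ x ∈ τ, ∑ ξ : Fin 3, φ ξ x = 1)
    (hgradzero : ∀ x ∈ τ, ∑ ξ : Fin 3, gradient (φ ξ) x = 0)
    -- integrability of the elemental data
    (hf : IntegrableOn f τ)
    (hFint : ∀ ξ : Fin 3,
      IntegrableOn (fun x => f x * (φ ξ x + δ * ⟪v x, gradient (φ ξ) x⟫)) τ)
    (hQint : ∀ ξ : Fin 3,
      IntegrableOn (fun x =>
        ⟪k x • gradient uh x - uh x • v x, gradient (φ ξ) x⟫
          + δ * vdiv (fun y => -(k y) • gradient uh y + uh y • v y) x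
              * ⟪v x, gradient (φ ξ) x⟫) τ)
    -- the arclength measure of `∂τ` decomposes along the pieces `∂τ ∩ ∂t_ξ`
    (hστ : στ = Measure.sum (fun ξ : Fin 3 => Γσ ξ))
    -- `ũ_{τ,h} = Σ_ξ α_ξ φ_ξ` solves the auxiliary Neumann problem (3.2)
    (hneumann : ∀ ξ : Fin 3,
      -(∫ x, k x * ⟪∑ η : Fin 3, α η • gradient (φ η) x, n ξ x⟫ ∂(σ ξ))
        = (∫ x in t ξ, f x) - ∫ x, uh x * ⟪v x, n ξ x⟫ ∂(σ ξ))
    -- with the boundary condition (3.3) on each `∂τ ∩ ∂t_ξ`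
    (hbc : ∀ ξ : Fin 3,
      (∫ x, ⟪-(k x) • (∑ η : Fin 3, α η • gradient (φ η) x) + uh x • v x, nτ x⟫ ∂(Γσ ξ))
        = Fel f v δ τ (φ ξ) - Qel k uh v δ τ (φ ξ))
    -- the divergence theorem holds on the triangle `τ` for `C¹` vector fields
    (hdivthm : ∀ G : E2 → E2, ContDiff ℝ 1 G →
      (∫ x in τ, vdiv G x) = ∫ x, ⟪G x, nτ x⟫ ∂στ)
    -- regularity making the true flux a `C¹` vector field
    (hu : ContDiff ℝ 2 u) (hk : ContDiff ℝ 1 k) (hv : ContDiff ℝ 1 v)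
    -- integrability of the boundary fluxes
    (hbint : Integrable (fun x =>
      ⟪-(k x) • (∑ η : Fin 3, α η • gradient (φ η) x) + uh x • v x, nτ x⟫) στ)
    (htrueint : Integrable (fun x =>
      ⟪-(k x) • gradient u x + u x • v x, nτ x⟫) στ) :
    (∫ x, ⟪-(k x) • (∑ η : Fin 3, α η • gradient (φ η) x) + uh x • v x, nτ x⟫ ∂στ)
      = ∫ x, ⟪-(k x) • gradient u x + u x • v x, nτ x⟫ ∂στ := by
  classical
  -- the true-flux vector field
  set G : E2 → E2 := fun y => -(k y) • gradient u y + u y • v y with hGdef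
  -- `G` is `C¹`
  have hgrad : ContDiff ℝ 1 (fun x => gradient u x) := by
    have h1 : ContDiff ℝ 1 (fderiv ℝ u) := hu.fderiv_right (by norm_num)
    have := (InnerProductSpace.toDual ℝ E2).symm.contDiff.comp h1
    simpa [gradient, Function.comp_def] using this
  have hG1 : ContDiff ℝ 1 G := by
    exact (hk.neg.smul hgrad).add ((hu.of_le (by norm_num)).smul hv)
  -- `vdiv G` is continuous
  have hvc : Continuous (vdiv G) := by
    have hc : Continuous (fderiv ℝ G) := hG1.continuous_fderiv one_ne_zero
    refine continuous_finset_sum _ (fun i _ => ?_)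
    have : Continuous fun x => fderiv ℝ G x (EuclideanSpace.single i 1) :=
      ((ContinuousLinearMap.apply ℝ E2 (EuclideanSpace.single i 1)).continuous).comp hc
    exact (PiLp.continuous_apply 2 _ i).comp this
  -- Step 1: decompose the post-processed flux along the three pieces and use (3.3)
  have hL : (∫ x, ⟪-(k x) • (∑ η : Fin 3, α η • gradient (φ η) x) + uh x • v x, nτ x⟫ ∂στ)
      = ∑ ξ : Fin 3, (Fel f v δ τ (φ ξ) - Qel k uh v δ τ (φ ξ)) := by
    rw [hστ] at hbint ⊢
    rw [integral_sum_measure hbint, tsum_fintype]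
    exact Finset.sum_congr rfl fun ξ _ => hbc ξ
  -- Step 2: the total elemental residual is `∫_τ f`
  have hA : IntegrableOn (fun x => ∑ ξ : Fin 3,
      (f x * (φ ξ x + δ * ⟪v x, gradient (φ ξ) x⟫))) τ :=
    integrable_finset_sum _ (fun ξ _ => hFint ξ)
  have hB : IntegrableOn (fun x => ∑ ξ : Fin 3,
      (⟪k x • gradient uh x - uh x • v x, gradient (φ ξ) x⟫
        + δ * vdiv (fun y => -(k y) • gradient uh y + uh y • v y) x
            * ⟪v x, gradient (φ ξ) x⟫)) τ :=
    integrable_finset_sum _ (fun ξ _ => hQint ξ)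
  have hsum : ∑ ξ : Fin 3, (Fel f v δ τ (φ ξ) - Qel k uh v δ τ (φ ξ))
      = ∫ x in τ, f x := by
    unfold Fel Qel
    rw [Finset.sum_sub_distrib,
      ← integral_finset_sum _ (fun ξ _ => hFint ξ),
      ← integral_finset_sum _ (fun ξ _ => hQint ξ),
      ← integral_sub hA hB]
    refine integral_congr_ae (eqOn_ae_restrict (hA.sub hB).1 hf.1 fun x hx => ?_)
    have h1 := hpartition x hx
    have h2 := hgradzero x hx
    simp only [mul_add, ← mul_assoc, ← Finset.sum_sub_distrib, Finset.sum_sub_distrib,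
      Finset.sum_add_distrib, ← Finset.mul_sum, ← inner_sum, h1, h2, inner_zero_right,
      mul_one, mul_zero, add_zero, sub_zero]
  -- Step 3: by the PDE, `∫_τ f = ∫_τ vdiv G`
  have hdiveq : (∫ x in τ, vdiv G x) = ∫ x in τ, f x :=
    integral_congr_ae (eqOn_ae_restrict
      (hvc.stronglyMeasurable.aestronglyMeasurable) hf.1
      (fun x hx => hpde x (hτΩ hx)))
  -- conclude via the divergence theorem
  calc (∫ x, ⟪-(k x) • (∑ η : Fin 3, α η • gradient (φ η) x) + uh x • v x, nτ x⟫ ∂στ)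
      = ∫ x in τ, f x := hL.trans hsum
    _ = ∫ x in τ, vdiv G x := hdiveq.symm
    _ = ∫ x, ⟪G x, nτ x⟫ ∂στ := hdivthm G hG1
    _ = ∫ x, ⟪-(k x) • gradient u x + u x • v x, nτ x⟫ ∂στ := rfl
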